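/- Let λ ∈ [0,1] and let Φ = √λ·ψ000⊗e₀ + √(1−λ)·ψ100⊗e₁ ∈ ℂ^{Fin 3 → Fin 2} ⊗ ℂ² (a unit vector on three qubits plus one ancilla qubit for Eve). Let R be the 4×4 matrix on the last two tensor factors (party P₃ and Eve) obtained by partially tracing out the first two qubits: R_{(s,e),(s',e')} = Σ_{t ∈ Fin 2 × Fin 2} Φ_{(t,s,e)} · conj(Φ_{(t,s',e')}). Then R = (1/2)·[λ·I₂⊗E₀₀ + √(λ(1−λ))·σz⊗(E₀₁+E₁₀) + (1−λ)·I₂⊗E₁₁], where E_{ab} = |e_a⟩⟨e_b| are the 2×2 matrix units on Eve's qubit. -/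

import Mathlib

open Matrix BigOperators Finset Kronecker

noncomputable section

def sigmaz : Matrix (Fin 2) (Fin 2) ℂ := !![1, 0; 0, -1]

/-- The three-qubit GHZ basis vector
`|ψ_{ijk}⟩ = (1/√2)(e_{(0,j,k)} + (−1)^i e_{(1,1−j,1−k)})`. -/
def psi (i j k : Fin 2) : (Fin 3 → Fin 2) → ℂ := fun f =>
  ((Real.sqrt 2 : ℝ) : ℂ)⁻¹ *
    ((if f = ![0, j, k] then 1 else 0)
      + (-1 : ℂ) ^ (i : ℕ) * (if f = ![1, 1 - j, 1 - k] then 1 else 0))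

/-- The purification `Φ = √λ ψ₀₀₀⊗e₀ + √(1−λ) ψ₁₀₀⊗e₁` on three qubits plus Eve's qubit. -/
def Phi (lam : ℝ) : (Fin 3 → Fin 2) × Fin 2 → ℂ := fun p =>
  ((Real.sqrt lam : ℝ) : ℂ) * psi 0 0 0 p.1 * (if p.2 = 0 then 1 else 0)
    + ((Real.sqrt (1 - lam) : ℝ) : ℂ) * psi 1 0 0 p.1 * (if p.2 = 1 then 1 else 0)

set_option maxHeartbeats 2000000 in
/-- The reduced state on party `P₃` and Eve obtained by partially tracing out the first
two qubits of `Φ` equals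
`(1/2)(λ I₂⊗E₀₀ + √(λ(1−λ)) σz⊗(E₀₁+E₁₀) + (1−λ) I₂⊗E₁₁)`. -/
theorem reduced_state_P3_Eve (lam : ℝ) (h0 : 0 ≤ lam) (h1 : lam ≤ 1) :
    (Matrix.of fun p q : Fin 2 × Fin 2 =>
        ∑ t : Fin 2 × Fin 2,
          Phi lam (![t.1, t.2, p.1], p.2) * (starRingEnd ℂ) (Phi lam (![t.1, t.2, q.1], q.2)))
      = ((1 : ℂ) / 2) •
          ((lam : ℂ) • ((1 : Matrix (Fin 2) (Fin 2) ℂ) ⊗ₖ Matrix.single 0 0 (1 : ℂ))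
            + ((Real.sqrt (lam * (1 - lam)) : ℝ) : ℂ) •
                (sigmaz ⊗ₖ (Matrix.single 0 1 (1 : ℂ) + Matrix.single 1 0 (1 : ℂ)))
            + ((1 - lam : ℝ) : ℂ) •
                ((1 : Matrix (Fin 2) (Fin 2) ℂ) ⊗ₖ Matrix.single 1 1 (1 : ℂ))) := by
  have hl : ((Real.sqrt lam : ℝ) : ℂ) * ((Real.sqrt lam : ℝ) : ℂ) = (lam : ℂ) := by
    rw [← Complex.ofReal_mul, Real.mul_self_sqrt h0]
  have h1l : ((Real.sqrt (1 - lam) : ℝ) : ℂ) * ((Real.sqrt (1 - lam) : ℝ) : ℂ) = ((1 - lam : ℝ) : ℂ) := by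
    rw [← Complex.ofReal_mul, Real.mul_self_sqrt (by linarith)]
  have hmix : ((Real.sqrt lam : ℝ) : ℂ) * ((Real.sqrt (1 - lam) : ℝ) : ℂ)
      = ((Real.sqrt (lam * (1 - lam)) : ℝ) : ℂ) := by
    rw [← Complex.ofReal_mul, Real.sqrt_mul h0]
  have h2 : ((Real.sqrt 2 : ℝ) : ℂ)⁻¹ * ((Real.sqrt 2 : ℝ) : ℂ)⁻¹ = 1 / 2 := by
    rw [← mul_inv]
    norm_cast
    rw [Real.mul_self_sqrt (by norm_num)]
    norm_num
  ext ⟨p1, p2⟩ ⟨q1, q2⟩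
  have h1l' : ((Real.sqrt (1 - lam) : ℝ) : ℂ) * ((Real.sqrt (1 - lam) : ℝ) : ℂ)
      = 1 - (lam : ℂ) := by rw [h1l]; push_cast; ring
  fin_cases p1 <;> fin_cases p2 <;> fin_cases q1 <;> fin_cases q2 <;>
    (simp only [Matrix.of_apply, Fintype.sum_prod_type, Fin.sum_univ_two, Phi, psi,
        Matrix.smul_apply, Matrix.add_apply, Matrix.kroneckerMap_apply, Matrix.one_apply,
        sigmaz, Matrix.single, Matrix.cons_val_zero, Matrix.cons_val_one,
        Matrix.head_cons, Matrix.of_apply, map_add, _root_.map_mul, Complex.conj_ofReal,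
        map_pow, map_neg, _root_.map_one]
     norm_num [show (![0,0,0] : Fin 3 → Fin 2) ≠ ![1,1,1] by decide,
        funext_iff, Fin.forall_fin_succ])
  all_goals ring_nf
  all_goals
    try simp only [show ((lam : ℝ) - lam ^ 2) = lam * (1 - lam) from by ring, ← hmix]
  all_goals
    first
      | linear_combination ((Real.sqrt 2 : ℝ) : ℂ)⁻¹ ^ 2 * hl + (lam : ℂ) * h2
      | linear_combination ((Real.sqrt 2 : ℝ) : ℂ)⁻¹ ^ 2 * h1l' + (1 - (lam : ℂ)) * h2
      | linear_combination ((Real.sqrt lam : ℝ) : ℂ) * ((Real.sqrt (1 - lam) : ℝ) : ℂ) * h2
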